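/- arXiv:math/0104051 — 2 statements merged into one kernel-verified Lean document; each statement's English description precedes it below -/
import Mathlib

section
/- For every integer m ≥ 1 and any complex number ρ with ρ ≠ 0 and ρ ≠ 1, setting x = ρ(1-ρ), one has x^{-m} = ∑_{n=1}^{m} C(2m-n-1, m-1) · (ρ^{-n} + (1-ρ)^{-n}). -/
open Finset

/-- Truncated negative binomial series: `T m t = ∑_{j=0}^{m} C(m+j,j) t^j`. -/
private noncomputable def Tser (m : ℕ) (t : ℂ) : ℂ :=
  ∑ j ∈ range (m + 1), ((m + j).choose j : ℂ) * t ^ j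

private lemma sumA (m : ℕ) (t : ℂ) :
    Tser (m + 1) t
      = Tser m t + ((2 * m + 1).choose (m + 1) : ℂ) * t ^ (m + 1)
        + t * (Tser (m + 1) t - ((2 * m + 2).choose (m + 1) : ℂ) * t ^ (m + 1)) := by
  have hstrip : Tser (m+1) t - ((2*m+2).choose (m+1) : ℂ) * t ^ (m+1)
      = ∑ j ∈ range (m + 1), ((m + 1 + j).choose j : ℂ) * t ^ j := by
    rw [Tser, Finset.sum_range_succ]
    have : m + 1 + (m + 1) = 2 * m + 2 := by ring
    rw [this]; ring
  rw [hstrip, Tser, Finset.sum_range_succ' _ (m + 1)]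
  have hterm : ∀ j ∈ range (m + 1),
      ((m + 1 + (j + 1)).choose (j + 1) : ℂ) * t ^ (j + 1)
        = ((m + j + 1).choose j : ℂ) * t ^ (j + 1)
          + ((m + j + 1).choose (j + 1) : ℂ) * t ^ (j + 1) := by
    intro j _
    have h : m + 1 + (j + 1) = (m + j + 1) + 1 := by ring
    rw [h, Nat.choose_succ_succ]
    push_cast; ring
  rw [Finset.sum_congr rfl hterm, Finset.sum_add_distrib]
  have h1 : ∑ j ∈ range (m + 1), ((m + j + 1).choose (j + 1) : ℂ) * t ^ (j + 1)
      = ∑ j ∈ range m, ((m + j + 1).choose (j + 1) : ℂ) * t ^ (j + 1)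
        + ((2 * m + 1).choose (m + 1) : ℂ) * t ^ (m + 1) := by
    rw [Finset.sum_range_succ]
    have : m + m + 1 = 2 * m + 1 := by ring
    rw [this]
  have h2 : Tser m t
      = ∑ j ∈ range m, ((m + (j + 1)).choose (j + 1) : ℂ) * t ^ (j + 1)
        + ((m + 0).choose 0 : ℂ) * t ^ 0 := by
    rw [Tser, Finset.sum_range_succ' _ m]
  have h3 : t * ∑ j ∈ range (m + 1), ((m + 1 + j).choose j : ℂ) * t ^ j
      = ∑ j ∈ range (m + 1), ((m + j + 1).choose j : ℂ) * t ^ (j + 1) := by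
    rw [Finset.mul_sum]
    refine Finset.sum_congr rfl fun j _ => ?_
    have : m + 1 + j = m + j + 1 := by ring
    rw [this]; ring
  rw [h1, h2, h3]
  have h4 : ∀ j ∈ range m, ((m + (j + 1)).choose (j + 1) : ℂ) * t ^ (j + 1)
      = ((m + j + 1).choose (j + 1) : ℂ) * t ^ (j + 1) := by
    intro j _
    have : m + (j + 1) = m + j + 1 := by ring
    rw [this]
  rw [Finset.sum_congr rfl h4]
  simp
  ring

private lemma choose_double (m : ℕ) :
    (2 * m + 2).choose (m + 1) = 2 * (2 * m + 1).choose (m + 1) := by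
  have h1 : (2 * m + 2).choose (m + 1)
      = (2 * m + 1).choose m + (2 * m + 1).choose (m + 1) :=
    Nat.choose_succ_succ (2 * m + 1) m
  have h2 : (2 * m + 1).choose m = (2 * m + 1).choose (m + 1) := by
    have := Nat.choose_symm (n := 2 * m + 1) (k := m + 1) (by omega)
    simpa [show 2 * m + 1 - (m + 1) = m by omega] using this
  omega

private lemma key (m : ℕ) (t : ℂ) :
    (1 - t) ^ (m + 1) * Tser m t + t ^ (m + 1) * Tser m (1 - t) = 1 := by
  induction m with
  | zero => simp [Tser]
  | succ m ih =>
    have hA := sumA m t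
    have hB := sumA m (1 - t)
    have hA' : (1 - t) * Tser (m + 1) t
        = Tser m t + ((2*m+1).choose (m+1) : ℂ) * t ^ (m+1)
          - ((2*m+2).choose (m+1) : ℂ) * t ^ (m + 2) := by
      linear_combination hA
    have hB' : t * Tser (m + 1) (1 - t)
        = Tser m (1 - t) + ((2*m+1).choose (m+1) : ℂ) * (1 - t) ^ (m+1)
          - ((2*m+2).choose (m+1) : ℂ) * (1 - t) ^ (m + 2) := by
      linear_combination hB
    have hb : ((2*m+2).choose (m+1) : ℂ) = 2 * ((2*m+1).choose (m+1) : ℂ) := by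
      exact_mod_cast congrArg (Nat.cast : ℕ → ℂ) (choose_double m)
    calc (1 - t) ^ (m + 1 + 1) * Tser (m + 1) t + t ^ (m + 1 + 1) * Tser (m + 1) (1 - t)
        = (1 - t) ^ (m + 1) * ((1 - t) * Tser (m + 1) t)
          + t ^ (m + 1) * (t * Tser (m + 1) (1 - t)) := by ring
      _ = 1 := by rw [hA', hB', hb]; linear_combination ih

/-- for `m ≥ 1` and `ρ ≠ 0, 1`, with `x = ρ(1-ρ)`,
`x^{-m} = ∑_{n=1}^m C(2m-n-1, m-1) (ρ^{-n} + (1-ρ)^{-n})`. -/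
theorem riemann_zeros_inverse_power_sum_expansion (m : ℕ) (hm : 1 ≤ m) (ρ : ℂ)
    (hρ0 : ρ ≠ 0) (hρ1 : ρ ≠ 1) :
    (ρ * (1 - ρ)) ^ (-(m : ℤ)) =
      ∑ n ∈ Finset.Icc 1 m, ((2 * m - n - 1).choose (m - 1) : ℂ) *
        (ρ ^ (-(n : ℤ)) + (1 - ρ) ^ (-(n : ℤ))) := by
  obtain ⟨M, rfl⟩ : ∃ M, m = M + 1 := ⟨m - 1, by omega⟩
  have h1ρ : (1 : ℂ) - ρ ≠ 0 := sub_ne_zero.mpr (Ne.symm hρ1)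
  have hx : ρ * (1 - ρ) ≠ 0 := mul_ne_zero hρ0 h1ρ
  have hmain : (ρ * (1 - ρ)) ^ (M + 1) *
      (∑ n ∈ Finset.Icc 1 (M + 1), ((2 * (M + 1) - n - 1).choose (M + 1 - 1) : ℂ) *
        (ρ ^ (-(n : ℤ)) + (1 - ρ) ^ (-(n : ℤ)))) = 1 := by
    rw [Finset.mul_sum]
    have hterm : ∀ n ∈ Finset.Icc 1 (M + 1),
        (ρ * (1 - ρ)) ^ (M + 1) * (((2 * (M + 1) - n - 1).choose (M + 1 - 1) : ℂ) *
          (ρ ^ (-(n : ℤ)) + (1 - ρ) ^ (-(n : ℤ))))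
        = ((2 * (M + 1) - n - 1).choose M : ℂ) *
          (ρ ^ (M + 1 - n) * (1 - ρ) ^ (M + 1) + (1 - ρ) ^ (M + 1 - n) * ρ ^ (M + 1)) := by
      intro n hn
      rw [Finset.mem_Icc] at hn
      have hn1 : n ≤ M + 1 := hn.2
      have e1 : ρ ^ (-(n : ℤ)) = (ρ ^ n)⁻¹ := by
        rw [zpow_neg, zpow_natCast]
      have e2 : (1 - ρ) ^ (-(n : ℤ)) = ((1 - ρ) ^ n)⁻¹ := by
        rw [zpow_neg, zpow_natCast]
      have e3 : ρ ^ (M + 1 - n) = ρ ^ (M + 1) / ρ ^ n := pow_sub₀ ρ hρ0 hn1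
      have e4 : (1 - ρ) ^ (M + 1 - n) = (1 - ρ) ^ (M + 1) / (1 - ρ) ^ n :=
        pow_sub₀ _ h1ρ hn1
      rw [e1, e2, e3, e4, mul_pow]
      have hρn : ρ ^ n ≠ 0 := pow_ne_zero _ hρ0
      have h1ρn : (1 - ρ) ^ n ≠ 0 := pow_ne_zero _ h1ρ
      simp only [Nat.add_sub_cancel]
      field_simp
    rw [Finset.sum_congr rfl hterm]
    have hicc : ∑ n ∈ Finset.Icc 1 (M + 1), ((2 * (M + 1) - n - 1).choose M : ℂ) *
          (ρ ^ (M + 1 - n) * (1 - ρ) ^ (M + 1) + (1 - ρ) ^ (M + 1 - n) * ρ ^ (M + 1))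
        = ∑ i ∈ range (M + 1), ((2 * M - i).choose M : ℂ) *
          (ρ ^ (M - i) * (1 - ρ) ^ (M + 1) + (1 - ρ) ^ (M - i) * ρ ^ (M + 1)) := by
      rw [← Finset.Ico_add_one_right_eq_Icc, Finset.sum_Ico_eq_sum_range]
      refine Finset.sum_congr (by norm_num) fun i hi => ?_
      rw [Finset.mem_range] at hi
      have e5 : 2 * (M + 1) - (1 + i) - 1 = 2 * M - i := by omega
      have e6 : M + 1 - (1 + i) = M - i := by omega
      rw [e5, e6]
    rw [hicc]
    have hsplit : ∑ i ∈ range (M + 1), ((2 * M - i).choose M : ℂ) *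
          (ρ ^ (M - i) * (1 - ρ) ^ (M + 1) + (1 - ρ) ^ (M - i) * ρ ^ (M + 1))
        = (1 - ρ) ^ (M + 1) * (∑ i ∈ range (M + 1), ((2 * M - i).choose M : ℂ) * ρ ^ (M - i))
          + ρ ^ (M + 1) * (∑ i ∈ range (M + 1), ((2 * M - i).choose M : ℂ) * (1 - ρ) ^ (M - i)) := by
      rw [Finset.mul_sum, Finset.mul_sum, ← Finset.sum_add_distrib]
      exact Finset.sum_congr rfl fun i _ => by ring
    rw [hsplit]
    have hT : ∀ t : ℂ, ∑ i ∈ range (M + 1), ((2 * M - i).choose M : ℂ) * t ^ (M - i)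
        = Tser M t := by
      intro t
      rw [Tser, ← Finset.sum_range_reflect]
      refine Finset.sum_congr rfl fun j hj => ?_
      rw [Finset.mem_range] at hj
      have e7 : 2 * M - (M + 1 - 1 - j) = M + j := by omega
      have e8 : M - (M + 1 - 1 - j) = j := by omega
      have e9 : (M + j).choose j = (M + j).choose M := by
        have := Nat.choose_symm (n := M + j) (k := M) (by omega)
        simpa [show M + j - M = j by omega] using this
      rw [e7, e8, e9]
    rw [hT, hT]
    exact key M ρ
  have : ((ρ * (1 - ρ)) ^ (M + 1))⁻¹ =
      ∑ n ∈ Finset.Icc 1 (M + 1), ((2 * (M + 1) - n - 1).choose (M + 1 - 1) : ℂ) *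
        (ρ ^ (-(n : ℤ)) + (1 - ρ) ^ (-(n : ℤ))) :=
    inv_eq_of_mul_eq_one_right hmain
  rw [← this, zpow_neg, zpow_natCast]
end

section
/- Let {x_k} be positive reals with ∑ 1/x_k < ∞, Z(σ) = ∑_k x_k^{−σ} (convergent for Re σ > μ₀ where 0 < μ₀ < 1 is the convergence abscissa), and Δ(z) = ∏_k (1 + z/x_k). Then for μ₀ < Re σ < 1, one has (σ·sin(πσ)/π) · ∫₀^∞ log Δ(z) · z^{−σ−1} dz = Z(σ). -/
open MeasureTheory Set Complex Filter Topology


lemma aux_betaIoi {s : ℂ} (hs0 : 0 < s.re) (hs1 : s.re < 1) :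
    ∫ t in Ioi (0:ℝ), (t : ℂ) ^ (s - 1) / (1 + (t : ℂ)) = ↑Real.pi / Complex.sin (↑Real.pi * s) := by
  have h1s : 0 < (1 - s).re := by simp [Complex.sub_re]; linarith
  -- Beta value
  have hB : Complex.betaIntegral s (1 - s) = ↑Real.pi / Complex.sin (↑Real.pi * s) := by
    have := Complex.Gamma_mul_Gamma_eq_betaIntegral hs0 h1s
    rw [add_sub_cancel, Complex.Gamma_one, one_mul] at this
    rw [← this, Complex.Gamma_mul_Gamma_one_sub]
  rw [← hB, Complex.betaIntegral]
  -- substitution u ↦ u/(1-u) from Ioo 0 1 to Ioi 0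
  have himg : (fun u : ℝ => u / (1 - u)) '' Ioo 0 1 = Ioi 0 := by
    ext t
    constructor
    · rintro ⟨u, ⟨hu0, hu1⟩, rfl⟩
      exact div_pos hu0 (by linarith)
    · intro ht
      refine ⟨t / (1 + t), ⟨div_pos ht (by linarith [ht.out]), ?_⟩, ?_⟩
      · rw [div_lt_one (by linarith [ht.out])]; linarith [ht.out]
      · have h1t : (0:ℝ) < 1 + t := by linarith [ht.out]
        field_simp; ring
  have hderiv : ∀ u ∈ Ioo (0:ℝ) 1, HasDerivWithinAt (fun u : ℝ => u / (1 - u))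
      (((1 - u) ^ 2)⁻¹) (Ioo 0 1) u := by
    intro u hu
    have h1u : (1:ℝ) - u ≠ 0 := (by linarith [hu.2] : (0:ℝ) < 1 - u).ne'
    have : HasDerivAt (fun u : ℝ => u / (1 - u))
        ((1 * (1 - u) - u * (-1)) / (1 - u) ^ 2) u :=
      (hasDerivAt_id u).div ((hasDerivAt_id u).const_sub 1) h1u
    refine this.hasDerivWithinAt.congr_deriv ?_
    ring
  have hinj : InjOn (fun u : ℝ => u / (1 - u)) (Ioo 0 1) := by
    intro a ha b hb hab
    have ha1 : (1:ℝ) - a ≠ 0 := (by linarith [ha.2] : (0:ℝ) < 1 - a).ne'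
    have hb1 : (1:ℝ) - b ≠ 0 := (by linarith [hb.2] : (0:ℝ) < 1 - b).ne'
    field_simp at hab
    linarith
  have := MeasureTheory.integral_image_eq_integral_abs_deriv_smul measurableSet_Ioo hderiv hinj
    (fun t : ℝ => (t : ℂ) ^ (s - 1) / (1 + (t : ℂ)))
  rw [himg] at this
  rw [this]
  rw [intervalIntegral.integral_of_le zero_le_one, MeasureTheory.integral_Ioc_eq_integral_Ioo]
  refine MeasureTheory.setIntegral_congr_fun measurableSet_Ioo (fun u hu => ?_)
  obtain ⟨hu0, hu1⟩ := hu
  have h1u : (0:ℝ) < 1 - u := by linarith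
  have hw : ((1 - u : ℝ) : ℂ) ≠ 0 := by exact_mod_cast h1u.ne'
  have e1 : ((u / (1 - u) : ℝ) : ℂ) = (u : ℂ) * (((1 - u)⁻¹ : ℝ) : ℂ) := by
    push_cast [div_eq_mul_inv]; ring
  have e2 : ((u : ℂ) * (((1 - u)⁻¹ : ℝ) : ℂ)) ^ (s - 1)
      = (u : ℂ) ^ (s - 1) * (((1 - u)⁻¹ : ℝ) : ℂ) ^ (s - 1) :=
    Complex.mul_cpow_ofReal_nonneg hu0.le (inv_nonneg.2 h1u.le) _
  have e3 : (((1 - u)⁻¹ : ℝ) : ℂ) ^ (s - 1) = ((1 - u : ℝ) : ℂ) ^ (-(s - 1)) := by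
    rw [Complex.ofReal_inv, Complex.inv_cpow _ _ ?_, ← Complex.cpow_neg]
    rw [Complex.arg_ofReal_of_nonneg h1u.le]
    exact Real.pi_ne_zero.symm
  have r4 : (1 : ℝ) + u / (1 - u) = (1 - u)⁻¹ := by field_simp; ring
  have e4 : (1 : ℂ) + ((u / (1 - u) : ℝ) : ℂ) = (((1 - u : ℝ) : ℂ))⁻¹ := by
    rw [show (1 : ℂ) + ((u / (1 - u) : ℝ) : ℂ) = (((1 : ℝ) + u / (1 - u) : ℝ) : ℂ) by push_cast; ring,
      r4, Complex.ofReal_inv]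
  rw [Complex.real_smul, e4, e1, e2, e3, show -(s-1) = -s + 1 by ring,
    Complex.cpow_add _ _ hw, Complex.cpow_one, show (1:ℂ) - s - 1 = -s by ring]
  have habs : |((1 - u) ^ 2)⁻¹| = ((1 - u) ^ 2)⁻¹ := abs_of_pos (by positivity)
  rw [habs]
  push_cast
  have hA : ((1:ℂ) - u) ≠ 0 := by push_cast at hw ⊢; exact hw
  field_simp

lemma aux_K2 {s : ℂ} (hs0 : 0 < s.re) (hs1 : s.re < 1) :
    ∫ t in Ioi (0:ℝ), (t : ℂ) ^ (-s) / (1 + (t : ℂ)) = ↑Real.pi / Complex.sin (↑Real.pi * s) := by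
  have h0 : 0 < (1 - s).re := by simp [Complex.sub_re]; linarith
  have h1 : (1 - s).re < 1 := by simp [Complex.sub_re]; linarith
  have := aux_betaIoi h0 h1
  rw [show (1 : ℂ) - s - 1 = -s by ring] at this
  rw [this, mul_one_sub, Complex.sin_pi_sub]

lemma aux_J {s : ℂ} (hs0 : 0 < s.re) (hs1 : s.re < 1) {x : ℝ} (hx : 0 < x) :
    ∫ t in Ioi (0:ℝ), (t : ℂ) ^ (-s) / ((x : ℂ) + (t : ℂ))
      = (x : ℂ) ^ (-s) * (↑Real.pi / Complex.sin (↑Real.pi * s)) := by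
  have hxc : (x : ℂ) ≠ 0 := by exact_mod_cast hx.ne'
  have hscale := MeasureTheory.integral_comp_mul_left_Ioi
    (fun t : ℝ => (t : ℂ) ^ (-s) / ((x : ℂ) + (t : ℂ))) 0 hx
  rw [mul_zero] at hscale
  have hpt : ∀ u ∈ Ioi (0:ℝ),
      ((x * u : ℝ) : ℂ) ^ (-s) / ((x : ℂ) + ((x * u : ℝ) : ℂ))
        = ((x : ℂ) ^ (-s) * ((x : ℝ) : ℂ)⁻¹) * ((u : ℂ) ^ (-s) / (1 + (u : ℂ))) := by
    intro u hu
    have hu0 : 0 < u := hu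
    have e1 : ((x * u : ℝ) : ℂ) ^ (-s) = (x : ℂ) ^ (-s) * (u : ℂ) ^ (-s) := by
      rw [Complex.ofReal_mul]
      exact Complex.mul_cpow_ofReal_nonneg hx.le hu0.le _
    have e2 : (x : ℂ) + ((x * u : ℝ) : ℂ) = (x : ℂ) * (1 + (u : ℂ)) := by push_cast; ring
    rw [e1, e2]
    have h1u : (1 : ℂ) + (u : ℂ) ≠ 0 := by
      have : (0:ℝ) < 1 + u := by linarith
      exact_mod_cast this.ne'
    field_simp
  rw [MeasureTheory.setIntegral_congr_fun measurableSet_Ioi hpt,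
    MeasureTheory.integral_const_mul, aux_K2 hs0 hs1] at hscale
  have key : ∫ t in Ioi (0:ℝ), (t : ℂ) ^ (-s) / ((x : ℂ) + (t : ℂ))
      = (x : ℝ) • ((x : ℂ) ^ (-s) * ((x : ℝ) : ℂ)⁻¹ * (↑Real.pi / Complex.sin (↑Real.pi * s))) := by
    calc ∫ t in Ioi (0:ℝ), (t : ℂ) ^ (-s) / ((x : ℂ) + (t : ℂ))
        = (x : ℝ) • ((x:ℝ)⁻¹ • ∫ t in Ioi (0:ℝ), (t : ℂ) ^ (-s) / ((x : ℂ) + (t : ℂ))) := by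
          rw [smul_smul, mul_inv_cancel₀ hx.ne', one_smul]
      _ = _ := by rw [← hscale]
  rw [key, Complex.real_smul]
  linear_combination ((x:ℂ)^(-s) * ((Real.pi:ℂ) / Complex.sin ((Real.pi:ℂ) * s))) * (mul_inv_cancel₀ hxc)

-- real integrability of log(1+z/x) z^(-σ-1) on (0,∞)
lemma aux_intB_real {σ : ℝ} (hσ0 : 0 < σ) (hσ1 : σ < 1) {x : ℝ} (hx : 0 < x) :
    IntegrableOn (fun z : ℝ => Real.log (1 + z / x) * z ^ (-σ - 1)) (Ioi (0:ℝ)) := by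
  have hc : ContinuousOn (fun z : ℝ => Real.log (1 + z / x) * z ^ (-σ - 1)) (Ioi 0) := by
    apply ContinuousOn.mul
    · apply ContinuousOn.log
      · fun_prop
      · intro z hz
        have : (0:ℝ) < z := hz
        positivity
    · exact ContinuousOn.rpow_const continuousOn_id (fun z hz => Or.inl (ne_of_gt hz))
  have hsplit : Ioi (0:ℝ) = Ioc 0 1 ∪ Ioi 1 := (Ioc_union_Ioi_eq_Ioi zero_le_one).symm
  rw [hsplit]
  apply IntegrableOn.union
  · -- on Ioc 0 1: bound by (1/x) * z^(-σ)
    have hg : IntegrableOn (fun z : ℝ => (1/x) * z ^ (-σ)) (Ioc (0:ℝ) 1) := by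
      refine Integrable.const_mul ?_ _
      have := (intervalIntegral.intervalIntegrable_rpow' (by linarith : (-1:ℝ) < -σ)
        (a := 0) (b := 1))
      rwa [intervalIntegrable_iff_integrableOn_Ioc_of_le zero_le_one] at this
    refine hg.integrable.mono' ((hc.mono ?_).aestronglyMeasurable measurableSet_Ioc) ?_
    · exact fun z hz => hz.1
    · filter_upwards [ae_restrict_mem measurableSet_Ioc] with z hz
      obtain ⟨hz0, hz1⟩ := hz
      have hzx : (0:ℝ) < 1 + z / x := by positivity
      have hlog0 : 0 ≤ Real.log (1 + z / x) := Real.log_nonneg (by have h0 : 0 ≤ z / x := div_nonneg hz0.le hx.le; linarith)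
      have hlog : Real.log (1 + z / x) ≤ z / x := by
        have := Real.log_le_sub_one_of_pos hzx
        linarith
      have hrp : (0:ℝ) ≤ z ^ (-σ - 1) := Real.rpow_nonneg hz0.le _
      rw [Real.norm_of_nonneg (mul_nonneg hlog0 hrp)]
      calc Real.log (1 + z / x) * z ^ (-σ - 1) ≤ (z / x) * z ^ (-σ - 1) := by
            exact mul_le_mul_of_nonneg_right hlog hrp
        _ = (1/x) * (z ^ (-σ - 1) * z) := by ring
        _ = (1/x) * z ^ (-σ) := by
            rw [← Real.rpow_add_one hz0.ne' (-σ - 1)]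
            norm_num
  · -- on Ioi 1: bound by C * z^(σ/2 - σ - 1)
    set δ := σ / 2 with hδ
    have hδ0 : 0 < δ := by positivity
    set C := (1 + 1/x) ^ δ / δ with hC
    have hg : IntegrableOn (fun z : ℝ => C * z ^ (δ - σ - 1)) (Ioi (1:ℝ)) :=
      (integrableOn_Ioi_rpow_of_lt (by simp only [hδ]; linarith) one_pos).const_mul C
    refine hg.integrable.mono' ((hc.mono ?_).aestronglyMeasurable measurableSet_Ioi) ?_
    · exact fun z hz => mem_Ioi.2 (lt_trans one_pos (mem_Ioi.1 hz))
    · filter_upwards [ae_restrict_mem measurableSet_Ioi] with z hz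
      have hz1 : (1:ℝ) < z := hz
      have hz0 : (0:ℝ) < z := lt_trans one_pos hz1
      have hzx : (0:ℝ) ≤ 1 + z / x := by positivity
      have hlog0 : 0 ≤ Real.log (1 + z / x) := Real.log_nonneg (by have h0 : 0 ≤ z / x := div_nonneg hz0.le hx.le; linarith)
      have hrp : (0:ℝ) ≤ z ^ (-σ - 1) := Real.rpow_nonneg hz0.le _
      rw [Real.norm_of_nonneg (mul_nonneg hlog0 hrp)]
      have hlog : Real.log (1 + z / x) ≤ (1 + 1/x) ^ δ * z ^ δ / δ := by
        refine (Real.log_le_rpow_div hzx hδ0).trans ?_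
        have h1 : 1 + z / x ≤ (1 + 1/x) * z := by
          rw [add_mul, one_mul]
          have : z / x = 1/x * z := by ring
          linarith
        have h2 : (1 + z/x) ^ δ ≤ ((1 + 1/x) * z) ^ δ :=
          Real.rpow_le_rpow hzx h1 hδ0.le
        rw [Real.mul_rpow (by positivity) hz0.le] at h2
        gcongr
      calc Real.log (1 + z / x) * z ^ (-σ - 1)
          ≤ ((1 + 1/x) ^ δ * z ^ δ / δ) * z ^ (-σ - 1) := mul_le_mul_of_nonneg_right hlog hrp
        _ = C * (z ^ δ * z ^ (-σ - 1)) := by rw [hC]; ring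
        _ = C * z ^ (δ - σ - 1) := by
            rw [← Real.rpow_add hz0]
            ring_nf

lemma aux_norm_g {s : ℂ} {x z : ℝ} (hx : 0 < x) (hz : 0 < z) :
    ‖((Real.log (1 + z / x) : ℝ) : ℂ) * (z : ℂ) ^ (-s - 1)‖
      = Real.log (1 + z / x) * z ^ (-s.re - 1) := by
  have hlog0 : 0 ≤ Real.log (1 + z / x) :=
    Real.log_nonneg (by have h0 : 0 ≤ z / x := div_nonneg hz.le hx.le; linarith)
  rw [norm_mul, Complex.norm_real, Real.norm_of_nonneg hlog0,
    Complex.norm_cpow_eq_rpow_re_of_pos hz]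
  norm_num

lemma aux_contB {s : ℂ} {x : ℝ} (hx : 0 < x) :
    ContinuousOn (fun z : ℝ => ((Real.log (1 + z / x) : ℝ) : ℂ) * (z : ℂ) ^ (-s - 1)) (Ioi 0) := by
  apply ContinuousOn.mul
  · apply Complex.continuous_ofReal.comp_continuousOn
    apply ContinuousOn.log
    · fun_prop
    · intro z hz
      have hz0 : (0:ℝ) < z := hz
      have h0 : 0 ≤ z / x := div_nonneg hz0.le hx.le
      linarith
  · intro z hz
    exact (continuousAt_ofReal_cpow_const z _ (Or.inr (ne_of_gt hz))).continuousWithinAt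

lemma aux_intB {s : ℂ} (hs0 : 0 < s.re) (hs1 : s.re < 1) {x : ℝ} (hx : 0 < x) :
    IntegrableOn (fun z : ℝ => ((Real.log (1 + z / x) : ℝ) : ℂ) * (z : ℂ) ^ (-s - 1))
      (Ioi (0:ℝ)) := by
  refine (aux_intB_real hs0 hs1 hx).integrable.mono'
    ((aux_contB hx).aestronglyMeasurable measurableSet_Ioi) ?_
  filter_upwards [ae_restrict_mem measurableSet_Ioi] with z hz
  rw [aux_norm_g hx hz]

lemma aux_intA {s : ℂ} (hs0 : 0 < s.re) (hs1 : s.re < 1) {x : ℝ} (hx : 0 < x) :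
    IntegrableOn (fun t : ℝ => (t : ℂ) ^ (-s) / ((x : ℂ) + (t : ℂ))) (Ioi (0:ℝ)) := by
  have hc : ContinuousOn (fun t : ℝ => (t : ℂ) ^ (-s) / ((x : ℂ) + (t : ℂ))) (Ioi 0) := by
    apply ContinuousOn.div
    · intro t ht
      exact (continuousAt_ofReal_cpow_const t _ (Or.inr (ne_of_gt ht))).continuousWithinAt
    · fun_prop
    · intro t ht
      have ht0 : (0:ℝ) < t := ht
      have : (0:ℝ) < x + t := by linarith
      rw [show (x:ℂ) + (t:ℂ) = ((x + t : ℝ) : ℂ) by push_cast; ring]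
      exact_mod_cast this.ne'
  have hnorm : ∀ t : ℝ, 0 < t → ‖(t : ℂ) ^ (-s) / ((x : ℂ) + (t : ℂ))‖ = t ^ (-s.re) / (x + t) := by
    intro t ht
    have hxt : (0:ℝ) < x + t := by linarith
    rw [norm_div, Complex.norm_cpow_eq_rpow_re_of_pos ht,
      show (x:ℂ) + (t:ℂ) = ((x + t : ℝ) : ℂ) by push_cast; ring, Complex.norm_real,
      Real.norm_of_nonneg hxt.le]
    norm_num
  have hsplit : Ioi (0:ℝ) = Ioc 0 1 ∪ Ioi 1 := (Ioc_union_Ioi_eq_Ioi zero_le_one).symm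
  rw [hsplit]
  apply IntegrableOn.union
  · have hg : IntegrableOn (fun t : ℝ => (1/x) * t ^ (-s.re)) (Ioc (0:ℝ) 1) := by
      refine Integrable.const_mul ?_ _
      have := (intervalIntegral.intervalIntegrable_rpow' (by linarith : (-1:ℝ) < -s.re)
        (a := 0) (b := 1))
      rwa [intervalIntegrable_iff_integrableOn_Ioc_of_le zero_le_one] at this
    refine hg.integrable.mono' ((hc.mono (fun t ht => ht.1)).aestronglyMeasurable
      measurableSet_Ioc) ?_
    filter_upwards [ae_restrict_mem measurableSet_Ioc] with t ht
    rw [hnorm t ht.1]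
    have hxt : (0:ℝ) < x + t := by linarith [ht.1]
    rw [div_le_iff₀ hxt, one_div, mul_comm x⁻¹, mul_assoc]
    have h1 : (1:ℝ) ≤ x⁻¹ * (x + t) := by
      rw [mul_add, inv_mul_cancel₀ hx.ne']
      have : 0 ≤ x⁻¹ * t := mul_nonneg (inv_nonneg.2 hx.le) (le_of_lt ht.1)
      linarith
    nlinarith [Real.rpow_nonneg (le_of_lt ht.1) (-s.re)]
  · have hg : IntegrableOn (fun t : ℝ => t ^ (-s.re - 1)) (Ioi (1:ℝ)) :=
      integrableOn_Ioi_rpow_of_lt (by linarith) one_pos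
    refine hg.integrable.mono' ((hc.mono (fun t ht => mem_Ioi.2 (lt_trans one_pos (mem_Ioi.1 ht)))).aestronglyMeasurable
      measurableSet_Ioi) ?_
    filter_upwards [ae_restrict_mem measurableSet_Ioi] with t ht
    have ht1 : (1:ℝ) < t := ht
    have ht0 : (0:ℝ) < t := lt_trans one_pos ht1
    rw [hnorm t ht0]
    have hxt : (0:ℝ) < x + t := by linarith
    calc t ^ (-s.re) / (x + t) ≤ t ^ (-s.re) / t := by
          apply div_le_div_of_nonneg_left (Real.rpow_nonneg ht0.le _) ht0
          linarith
      _ = t ^ (-s.re - 1) := by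
          rw [← Real.rpow_sub_one ht0.ne']

lemma aux_ibp {s : ℂ} (hs0 : 0 < s.re) (hs1 : s.re < 1) {x : ℝ} (hx : 0 < x) :
    s * ∫ z in Ioi (0:ℝ), ((Real.log (1 + z / x) : ℝ) : ℂ) * (z : ℂ) ^ (-s - 1)
      = ∫ t in Ioi (0:ℝ), (t : ℂ) ^ (-s) / ((x : ℂ) + (t : ℂ)) := by
  have hsne : s ≠ 0 := by
    intro h; rw [h] at hs0; simp at hs0
  set F : ℝ → ℂ := fun z => ((Real.log (1 + z / x) : ℝ) : ℂ) * ((z : ℂ) ^ (-s) / (-s)) with hF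
  set F' : ℝ → ℂ := fun z => (-s)⁻¹ * ((z : ℂ) ^ (-s) / ((x : ℂ) + (z : ℂ)))
      + ((Real.log (1 + z / x) : ℝ) : ℂ) * (z : ℂ) ^ (-s - 1) with hF'
  have hderiv : ∀ z ∈ Ioi (0:ℝ), HasDerivAt F (F' z) z := by
    intro z hz
    have hz0 : (0:ℝ) < z := hz
    have hzx : (0:ℝ) < 1 + z / x := by positivity
    have h₁ : HasDerivAt (fun z : ℝ => Real.log (1 + z / x)) ((x + z)⁻¹) z := by
      have ha : HasDerivAt (fun z : ℝ => 1 + z / x) (1 / x) z :=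
        ((hasDerivAt_id z).div_const x).const_add 1
      have := ha.log hzx.ne'
      convert this using 1
      field_simp
    have h₂ : HasDerivAt (fun z : ℝ => (z : ℂ) ^ (-s) / (-s)) ((z : ℂ) ^ (-s - 1)) z := by
      have hr : (-s - 1 : ℂ) ≠ -1 := by
        intro h
        apply hsne
        have : -s = 0 := by linear_combination h
        linear_combination -this
      have := hasDerivAt_ofReal_cpow_const' hz0.ne' hr
      have he : (-s - 1 : ℂ) + 1 = -s := by ring
      rw [he] at this
      exact this
    have := (h₁.ofReal_comp).mul h₂
    refine HasDerivAt.congr_deriv this ?_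
    rw [hF']
    have hxz : ((x : ℂ) + (z : ℂ)) ≠ 0 := by
      rw [show (x:ℂ) + (z:ℂ) = ((x + z : ℝ) : ℂ) by push_cast; ring]
      exact_mod_cast (by linarith : (0:ℝ) < x + z).ne'
    push_cast
    field_simp
  have hσ1' : (0:ℝ) < 1 - s.re := by linarith
  have hF0 : F 0 = 0 := by simp [hF]
  have hcont : ContinuousWithinAt F (Ici (0:ℝ)) 0 := by
    rw [ContinuousWithinAt, hF0]
    have htendg : Tendsto (fun z : ℝ => z ^ (1 - s.re) / (x * ‖s‖))
        (nhdsWithin 0 (Ici (0:ℝ))) (𝓝 0) := by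
      have h1 : Tendsto (fun z : ℝ => z ^ (1 - s.re)) (nhdsWithin 0 (Ici (0:ℝ))) (𝓝 0) := by
        have hca : ContinuousAt (fun z : ℝ => z ^ (1 - s.re)) 0 :=
          Real.continuousAt_rpow_const 0 _ (Or.inr hσ1'.le)
        have h0 : (0:ℝ) ^ (1 - s.re) = 0 := Real.zero_rpow hσ1'.ne'
        have h2 : Tendsto (fun z : ℝ => z ^ (1 - s.re)) (nhdsWithin (0:ℝ) (Ici (0:ℝ)))
            (𝓝 ((0:ℝ) ^ (1 - s.re))) := hca.continuousWithinAt
        rwa [h0] at h2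
      simpa using h1.div_const (x * ‖s‖)
    refine squeeze_zero_norm' ?_ htendg
    filter_upwards [self_mem_nhdsWithin] with z (hz : z ∈ Ici (0:ℝ))
    rcases eq_or_lt_of_le (mem_Ici.1 hz) with h | h
    · simp [hF, ← h, Real.zero_rpow hσ1'.ne']
    · have hzx : (0:ℝ) < 1 + z / x := by positivity
      have hlog0 : 0 ≤ Real.log (1 + z / x) :=
        Real.log_nonneg (by have := div_nonneg h.le hx.le; linarith)
      have hlog : Real.log (1 + z / x) ≤ z / x := by
        have := Real.log_le_sub_one_of_pos hzx; linarith
      have : ‖F z‖ = Real.log (1 + z / x) * (z ^ (-s.re) / ‖s‖) := by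
        rw [hF]
        simp only [norm_mul, norm_div, Complex.norm_real, Real.norm_of_nonneg hlog0,
          norm_neg,
          Complex.norm_cpow_eq_rpow_re_of_pos h]
        norm_num
      rw [this]
      calc Real.log (1 + z / x) * (z ^ (-s.re) / ‖s‖)
          ≤ (z / x) * (z ^ (-s.re) / ‖s‖) :=
            mul_le_mul_of_nonneg_right hlog (by positivity)
        _ = z * z ^ (-s.re) / (x * ‖s‖) := by ring
        _ = z ^ (1 - s.re) / (x * ‖s‖) := by
            rw [show (1:ℝ) - s.re = 1 + (-s.re) by ring, Real.rpow_add h, Real.rpow_one]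
  have htop : Tendsto F atTop (𝓝 0) := by
    set δ : ℝ := s.re / 2 with hδ
    have hδ0 : 0 < δ := by positivity
    have htendg : Tendsto (fun z : ℝ => ((1 + 1/x) ^ δ / δ) * z ^ (δ - s.re) / ‖s‖)
        atTop (𝓝 0) := by
      have h1 : Tendsto (fun z : ℝ => z ^ (δ - s.re)) atTop (𝓝 0) := by
        have := tendsto_rpow_neg_atTop (y := s.re - δ) (by simp only [hδ]; linarith)
        simpa [neg_sub] using this
      have := (h1.const_mul ((1 + 1/x) ^ δ / δ)).div_const ‖s‖
      simpa [mul_div_assoc] using this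
    refine squeeze_zero_norm' ?_ htendg
    filter_upwards [eventually_ge_atTop (1:ℝ)] with z hz1
    have hz0 : (0:ℝ) < z := lt_of_lt_of_le one_pos hz1
    have hzx : (0:ℝ) ≤ 1 + z / x := by positivity
    have hlog0 : 0 ≤ Real.log (1 + z / x) :=
      Real.log_nonneg (by have := div_nonneg hz0.le hx.le; linarith)
    have hlog : Real.log (1 + z / x) ≤ (1 + 1/x) ^ δ * z ^ δ / δ := by
      refine (Real.log_le_rpow_div hzx hδ0).trans ?_
      have h1 : 1 + z / x ≤ (1 + 1/x) * z := by
        rw [add_mul, one_mul]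
        have : z / x = 1/x * z := by ring
        linarith
      have h2 : (1 + z/x) ^ δ ≤ ((1 + 1/x) * z) ^ δ := Real.rpow_le_rpow hzx h1 hδ0.le
      rw [Real.mul_rpow (by positivity) hz0.le] at h2
      gcongr
    have hnF : ‖F z‖ = Real.log (1 + z / x) * (z ^ (-s.re) / ‖s‖) := by
      rw [hF]
      simp only [norm_mul, norm_div, Complex.norm_real, Real.norm_of_nonneg hlog0,
        norm_neg,
        Complex.norm_cpow_eq_rpow_re_of_pos hz0]
      norm_num
    rw [hnF]
    have hbound : Real.log (1 + z / x) * (z ^ (-s.re) / ‖s‖)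
        ≤ ((1 + 1/x) ^ δ * z ^ δ / δ) * (z ^ (-s.re) / ‖s‖) := by
      apply mul_le_mul_of_nonneg_right hlog
      positivity
    refine hbound.trans (le_of_eq ?_)
    have hzz : z ^ δ * z ^ (-s.re) = z ^ (δ - s.re) := by
      rw [← Real.rpow_add hz0]; ring_nf
    rw [← hzz]; ring
  have hint : IntegrableOn F' (Ioi (0:ℝ)) :=
    ((aux_intA hs0 hs1 hx).const_mul _).add (aux_intB hs0 hs1 hx)
  have key := MeasureTheory.integral_Ioi_of_hasDerivAt_of_tendsto hcont hderiv hint htop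
  rw [hF0, sub_zero] at key
  rw [hF', MeasureTheory.integral_add ((aux_intA hs0 hs1 hx).const_mul _)
    (aux_intB hs0 hs1 hx), MeasureTheory.integral_const_mul] at key
  have hinv : s * (-s)⁻¹ = -1 := by field_simp
  set IA := ∫ t in Ioi (0:ℝ), (t : ℂ) ^ (-s) / ((x : ℂ) + (t : ℂ)) with hIA
  set IB := ∫ z in Ioi (0:ℝ), ((Real.log (1 + z / x) : ℝ) : ℂ) * (z : ℂ) ^ (-s - 1) with hIB
  calc s * IB = s * ((-s)⁻¹ * IA + IB) - s * (-s)⁻¹ * IA := by ring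
    _ = IA := by rw [key, hinv]; ring

lemma aux_scale {σ : ℝ} {x : ℝ} (hx : 0 < x) :
    ∫ z in Ioi (0:ℝ), Real.log (1 + z / x) * z ^ (-σ - 1)
      = x ^ (-σ) * ∫ z in Ioi (0:ℝ), Real.log (1 + z) * z ^ (-σ - 1) := by
  have hscale := MeasureTheory.integral_comp_mul_left_Ioi
    (fun z : ℝ => Real.log (1 + z / x) * z ^ (-σ - 1)) 0 hx
  rw [mul_zero] at hscale
  have hpt : ∀ u ∈ Ioi (0:ℝ),
      Real.log (1 + x * u / x) * (x * u) ^ (-σ - 1)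
        = x ^ (-σ - 1) * (Real.log (1 + u) * u ^ (-σ - 1)) := by
    intro u hu
    have hu0 : (0:ℝ) < u := hu
    have hxu : x * u / x = u := by field_simp
    rw [hxu, Real.mul_rpow hx.le hu0.le]
    ring
  rw [MeasureTheory.setIntegral_congr_fun measurableSet_Ioi hpt,
    MeasureTheory.integral_const_mul] at hscale
  have key : ∫ z in Ioi (0:ℝ), Real.log (1 + z / x) * z ^ (-σ - 1)
      = x • (x ^ (-σ - 1) * ∫ z in Ioi (0:ℝ), Real.log (1 + z) * z ^ (-σ - 1)) := by
    calc ∫ z in Ioi (0:ℝ), Real.log (1 + z / x) * z ^ (-σ - 1)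
        = x • (x⁻¹ • ∫ z in Ioi (0:ℝ), Real.log (1 + z / x) * z ^ (-σ - 1)) := by
          rw [smul_smul, mul_inv_cancel₀ hx.ne', one_smul]
      _ = _ := by rw [← hscale]
  rw [key, smul_eq_mul, ← mul_assoc]
  congr 1
  rw [mul_comm, ← Real.rpow_add_one hx.ne' (-σ - 1)]
  norm_num

/-- for positive reals `x_k` with `∑ 1/x_k < ∞`,
`Z(σ) = ∑_k x_k^{-σ}` (convergent for `Re σ > μ₀`, the convergence abscissa,
`0 < μ₀ < 1`) and `Δ(z) = ∏_k (1 + z/x_k)`, one has, for `μ₀ < Re σ < 1`,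
`(σ sin(πσ)/π) ∫₀^∞ log Δ(z) z^{-σ-1} dz = Z(σ)`. -/
theorem mellin_of_log_delta_eq_zeta
    (x : ℕ → ℝ) (hpos : ∀ k, 0 < x k)
    (hsum : Summable fun k => (x k)⁻¹)
    (μ₀ : ℝ) (hμ0 : 0 < μ₀) (hμ1 : μ₀ < 1)
    (hconv : ∀ s : ℂ, μ₀ < s.re → Summable fun k => (x k : ℂ) ^ (-s))
    (hdiv : ∀ σ : ℝ, σ < μ₀ → ¬ Summable fun k => (x k) ^ (-σ))
    (s : ℂ) (h1 : μ₀ < s.re) (h2 : s.re < 1) :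
    (s * Complex.sin ((Real.pi : ℂ) * s) / (Real.pi : ℂ)) *
        ∫ z in Set.Ioi (0 : ℝ),
          ((Real.log (∏' k : ℕ, (1 + z / x k)) : ℝ) : ℂ) * (z : ℂ) ^ (-s - 1) =
      ∑' k : ℕ, (x k : ℂ) ^ (-s) := by
  have hσ0 : 0 < s.re := hμ0.trans h1
  have hsne : s ≠ 0 := by intro h; rw [h] at hσ0; simp at hσ0
  -- summability of x_k ^ (-re s)
  have hσR : Summable fun k => (x k) ^ (-s.re) := by
    have h := hconv (s.re : ℂ) (by simpa using h1)
    have he : (fun k => (x k : ℂ) ^ (-(s.re : ℂ))) = fun k => (((x k) ^ (-s.re) : ℝ) : ℂ) := by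
      funext k
      rw [Complex.ofReal_cpow (hpos k).le, Complex.ofReal_neg]
    rw [he] at h
    exact Complex.summable_ofReal.mp h
  -- log of the product
  have hlogprod : ∀ z : ℝ, 0 < z →
      Real.log (∏' k : ℕ, (1 + z / x k)) = ∑' k : ℕ, Real.log (1 + z / x k) := by
    intro z hz
    have hfac : ∀ k, (0:ℝ) < 1 + z / x k := fun k => by
      have : 0 < z / x k := div_pos hz (hpos k); linarith
    have hsml : Summable fun k => Real.log (1 + z / x k) := by
      refine Summable.of_nonneg_of_le (fun k => Real.log_nonneg (by
          have : 0 ≤ z / x k := (div_pos hz (hpos k)).le; linarith))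
        (fun k => ?_) (hsum.mul_left z)
      have h := Real.log_le_sub_one_of_pos (hfac k)
      have h2 : z / x k = z * (x k)⁻¹ := div_eq_mul_inv _ _
      linarith
    have hp := hsml.hasSum.rexp
    have he : (Real.exp ∘ fun k => Real.log (1 + z / x k)) = fun k => 1 + z / x k :=
      funext fun k => Real.exp_log (hfac k)
    rw [he] at hp
    rw [hp.tprod_eq, Real.log_exp]
  -- the summand functions
  set g : ℕ → ℝ → ℂ := fun k z => ((Real.log (1 + z / x k) : ℝ) : ℂ) * (z : ℂ) ^ (-s - 1)
    with hg
  have hInt : ∀ k, Integrable (g k) (volume.restrict (Ioi (0:ℝ))) :=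
    fun k => aux_intB hσ0 h2 (hpos k)
  have hNormval : ∀ k, ∫ z in Ioi (0:ℝ), ‖g k z‖
      = (x k) ^ (-s.re) * ∫ z in Ioi (0:ℝ), Real.log (1 + z) * z ^ (-s.re - 1) := by
    intro k
    rw [MeasureTheory.setIntegral_congr_fun measurableSet_Ioi
      (fun z hz => aux_norm_g (hpos k) hz), aux_scale (hpos k)]
  have hNorm : Summable fun k => ∫ z in Ioi (0:ℝ), ‖g k z‖ := by
    rw [funext hNormval]
    exact hσR.mul_right _
  have hswap := MeasureTheory.integral_tsum_of_summable_integral_norm hInt hNorm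
  have hpt : ∀ z ∈ Ioi (0:ℝ),
      ((Real.log (∏' k : ℕ, (1 + z / x k)) : ℝ) : ℂ) * (z : ℂ) ^ (-s - 1)
        = ∑' k : ℕ, g k z := by
    intro z hz
    rw [hlogprod z hz, Complex.ofReal_tsum, tsum_mul_right]
  rw [MeasureTheory.setIntegral_congr_fun measurableSet_Ioi hpt, ← hswap]
  -- value of each integral
  have hsin : Complex.sin ((Real.pi : ℂ) * s) ≠ 0 := by
    intro h
    obtain ⟨k, hk⟩ := Complex.sin_eq_zero_iff.mp h
    have hπ : (Real.pi : ℂ) ≠ 0 := by exact_mod_cast Real.pi_ne_zero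
    rw [mul_comm] at hk
    have hs : s = (k : ℂ) := mul_right_cancel₀ hπ hk
    have : s.re = (k : ℤ) := by rw [hs]; simp
    rw [this] at hσ0 h2
    have hk0 : (0:ℤ) < k := by exact_mod_cast hσ0
    have hk1 : (k:ℤ) < 1 := by exact_mod_cast h2
    omega
  have hval : ∀ k, ∫ z in Ioi (0:ℝ), g k z
      = (x k : ℂ) ^ (-s) * ((Real.pi : ℂ) / (s * Complex.sin ((Real.pi : ℂ) * s))) := by
    intro k
    have hibp := aux_ibp hσ0 h2 (hpos k)
    rw [aux_J hσ0 h2 (hpos k)] at hibp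
    field_simp at hibp ⊢
    linear_combination hibp
  rw [tsum_congr hval, tsum_mul_right]
  have hπ : (Real.pi : ℂ) ≠ 0 := by exact_mod_cast Real.pi_ne_zero
  field_simp
  rw [mul_comm _ (∑' _ : ℕ, _), mul_div_cancel_right₀ _ (by rwa [mul_comm] at hsin)]
end
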